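/- (Strong duality of the Wasserstein-penalized robust problem.) Let (Z, d) be a complete separable metric space, let μ be a probability measure on Z, let C : Z → ℝ be bounded and continuous, and let λ ≥ 0. Then sup over probability measures ν on Z of [∫ C dν − λ·W_d(ν, μ)] = ∫ φ_λ dμ, where W_d(ν, μ) is the infimum over couplings π of ν and μ of ∫ d(z, z₀) dπ(z, z₀), and φ_λ(z₀) := sup over z ∈ Z of [C(z) − λ·d(z, z₀)]. -/

import Mathlib

open MeasureTheory ENNReal

/-- Integrability of a uniformly bounded a.e.-strongly-measurable function
w.r.t. a finite measure. -/
lemma integrable_of_abs_le {α : Type*} [MeasurableSpace α] (m : Measure α)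
    [IsFiniteMeasure m] (f : α → ℝ) (hf : AEStronglyMeasurable f m)
    (M : ℝ) (h : ∀ x, |f x| ≤ M) : Integrable f m :=
  (integrable_const M).mono' hf (Filter.Eventually.of_forall fun x => by
    rw [Real.norm_eq_abs]; exact h x)

/-- The Wasserstein distance between `ν` and `μ`: the infimum over couplings `π`
(with first marginal `ν` and second marginal `μ`) of `∫ d(z, z₀) dπ(z, z₀)`. -/
noncomputable def wassersteinDist {Z : Type*} [MetricSpace Z] [MeasurableSpace Z]
    (ν μ : Measure Z) : ℝ≥0∞ :=
  ⨅ (π : Measure (Z × Z)) (_ : π.map Prod.fst = ν ∧ π.map Prod.snd = μ),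
    ∫⁻ p, edist p.1 p.2 ∂π

/-- **Strong duality of the Wasserstein-penalized robust problem (Eq. (5)).**
On a complete separable metric space, for bounded continuous `C` and `lam ≥ 0`,
`sup_ν [∫ C dν − lam·W_d(ν, μ)] = ∫ φ_lam dμ` where the supremum is over probability
measures `ν` and `φ_lam(z₀) = sup_z [C(z) − lam·d(z, z₀)]`. -/
theorem wasserstein_penalized_strong_duality
    {Z : Type*} [MetricSpace Z] [CompleteSpace Z] [TopologicalSpace.SeparableSpace Z]
    [MeasurableSpace Z] [BorelSpace Z]
    (μ : Measure Z) [IsProbabilityMeasure μ]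
    (C : Z → ℝ) (hC : Continuous C) (hbdd : ∃ M : ℝ, ∀ z, |C z| ≤ M)
    (lam : ℝ) (hlam : 0 ≤ lam)
    (φ : Z → ℝ) (hφ : ∀ z₀, φ z₀ = ⨆ z : Z, (C z - lam * dist z z₀)) :
    (⨆ (ν : Measure Z) (_ : IsProbabilityMeasure ν),
        ((∫ z, C z ∂ν : ℝ) : EReal) - (lam : EReal) * (wassersteinDist ν μ : EReal))
      = ((∫ z₀, φ z₀ ∂μ : ℝ) : EReal) := by
  classical
  have hZ : Nonempty Z := by
    by_contra h
    rw [not_nonempty_iff] at h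
    have h1 := measure_univ (μ := μ)
    rw [Set.univ_eq_empty_iff.2 h, measure_empty] at h1
    exact zero_ne_one h1
  obtain ⟨M, hM⟩ := hbdd
  -- basic bounds
  have hBdd : ∀ z₀ : Z, BddAbove (Set.range fun z => C z - lam * dist z z₀) := by
    intro z₀
    refine ⟨M, ?_⟩
    rintro x ⟨z, rfl⟩
    have h1 : 0 ≤ lam * dist z z₀ := mul_nonneg hlam dist_nonneg
    have h2 := (abs_le.1 (hM z)).2
    show C z - lam * dist z z₀ ≤ M
    linarith
  have hle : ∀ z z₀ : Z, C z - lam * dist z z₀ ≤ φ z₀ := by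
    intro z z₀
    rw [hφ]
    exact le_ciSup (hBdd z₀) z
  have hCleφ : ∀ z : Z, C z ≤ φ z := by
    intro z
    have := hle z z
    simpa using this
  have hφleM : ∀ z₀ : Z, φ z₀ ≤ M := by
    intro z₀
    rw [hφ]
    refine ciSup_le fun z => ?_
    have h1 : 0 ≤ lam * dist z z₀ := mul_nonneg hlam dist_nonneg
    have h2 := (abs_le.1 (hM z)).2
    linarith
  have hφabs : ∀ z₀ : Z, |φ z₀| ≤ M := by
    intro z₀
    rw [abs_le]
    exact ⟨le_trans (abs_le.1 (hM z₀)).1 (hCleφ z₀), hφleM z₀⟩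
  -- φ is Lipschitz, hence continuous
  have hφsub : ∀ a b : Z, φ a - φ b ≤ lam * dist a b := by
    intro a b
    rw [sub_le_iff_le_add, hφ]
    refine ciSup_le fun z => ?_
    have htri : dist z b ≤ dist z a + dist a b := dist_triangle z a b
    have h2 : C z - lam * dist z b ≤ φ b := hle z b
    nlinarith
  have hφlip : LipschitzWith (Real.toNNReal lam) φ := by
    refine LipschitzWith.of_dist_le_mul fun a b => ?_
    rw [Real.dist_eq, Real.coe_toNNReal lam hlam, abs_sub_le_iff]
    constructor
    · exact hφsub a b
    · rw [dist_comm]; exact hφsub b a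
  have hφcont : Continuous φ := hφlip.continuous
  have hφint : Integrable φ μ :=
    integrable_of_abs_le μ φ hφcont.aestronglyMeasurable M hφabs
  refine le_antisymm (iSup₂_le fun ν hν => ?_) ?_
  · -- upper bound: each admissible ν gives value ≤ ∫ φ dμ
    haveI := hν
    rcases eq_or_lt_of_le hlam with h0 | hpos
    · -- lam = 0
      rw [← h0]
      have hφconst : ∀ z₀ : Z, φ z₀ = ⨆ z : Z, C z := by
        intro z₀
        rw [hφ, ← h0]
        simp
      have hSbdd : BddAbove (Set.range C) := ⟨M, by rintro x ⟨z, rfl⟩; exact (abs_le.1 (hM z)).2⟩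
      have hint : ∫ z₀, φ z₀ ∂μ = ⨆ z : Z, C z := by
        have : φ = fun _ => ⨆ z : Z, C z := funext hφconst
        rw [this, integral_const, probReal_univ]
        simp
      have hCν : ∫ z, C z ∂ν ≤ ⨆ z : Z, C z := by
        have h1 : ∫ z, C z ∂ν ≤ ∫ _, (⨆ z : Z, C z) ∂ν := by
          refine integral_mono (integrable_of_abs_le ν C hC.aestronglyMeasurable M hM)
            (integrable_const _) fun z => le_ciSup hSbdd z
        rw [integral_const, probReal_univ] at h1
        simpa using h1
      rw [EReal.coe_zero, zero_mul, sub_zero, hint, EReal.coe_le_coe_iff]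
      exact hCν
    · rcases eq_or_ne (wassersteinDist ν μ) ⊤ with hW | hW
      · rw [hW, EReal.coe_ennreal_top, EReal.mul_top_of_pos (by exact_mod_cast hpos),
          sub_eq_add_neg, EReal.neg_top, EReal.add_bot]
        exact bot_le
      · -- finite Wasserstein distance; main dual inequality
        have hkey : ∫ z, C z ∂ν ≤ ∫ z₀, φ z₀ ∂μ + lam * (wassersteinDist ν μ).toReal := by
          refine le_of_forall_pos_le_add fun ε hε => ?_
          set δ : ℝ := ε / lam with hδdef
          have hδ : 0 < δ := div_pos hε hpos
          have hlt : wassersteinDist ν μ < wassersteinDist ν μ + ENNReal.ofReal δ := by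
            exact ENNReal.lt_add_right hW (ne_of_gt (ENNReal.ofReal_pos.2 hδ))
          rw [wassersteinDist, iInf_lt_iff] at hlt
          obtain ⟨π, hlt⟩ := hlt
          rw [iInf_lt_iff] at hlt
          obtain ⟨⟨hπ1, hπ2⟩, hcost⟩ := hlt
          have hπuniv : π Set.univ = 1 := by
            have := congrArg (fun m : Measure Z => m Set.univ) hπ2
            simpa [Measure.map_apply measurable_snd MeasurableSet.univ] using this
          haveI : IsProbabilityMeasure π := ⟨hπuniv⟩
          have hfin : ∫⁻ p, edist p.1 p.2 ∂π < ⊤ :=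
            hcost.trans (lt_top_iff_ne_top.2 (ENNReal.add_ne_top.2 ⟨hW, ofReal_ne_top⟩))
          have hdistcont : Continuous fun p : Z × Z => dist p.1 p.2 :=
            continuous_fst.dist continuous_snd
          have hdist_int : Integrable (fun p : Z × Z => dist p.1 p.2) π := by
            refine ⟨hdistcont.aestronglyMeasurable, ?_⟩
            rw [hasFiniteIntegral_iff_ofReal (Filter.Eventually.of_forall fun p => dist_nonneg)]
            simpa [edist_dist] using hfin
          have hdist_eq : ∫ p, dist p.1 p.2 ∂π = (∫⁻ p, edist p.1 p.2 ∂π).toReal := by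
            rw [integral_eq_lintegral_of_nonneg_ae
              (Filter.Eventually.of_forall fun p => dist_nonneg) hdistcont.aestronglyMeasurable]
            simp [edist_dist]
          have hCπ : ∫ p : Z × Z, C p.1 ∂π = ∫ z, C z ∂ν := by
            rw [← hπ1, integral_map measurable_fst.aemeasurable hC.aestronglyMeasurable]
          have hφπ : ∫ p : Z × Z, φ p.2 ∂π = ∫ z₀, φ z₀ ∂μ := by
            rw [← hπ2, integral_map measurable_snd.aemeasurable hφcont.aestronglyMeasurable]
          have hCπ_int : Integrable (fun p : Z × Z => C p.1) π :=
            integrable_of_abs_le π _ (hC.comp continuous_fst).aestronglyMeasurable M fun p => hM _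
          have hφπ_int : Integrable (fun p : Z × Z => φ p.2) π :=
            integrable_of_abs_le π _ (hφcont.comp continuous_snd).aestronglyMeasurable M
              fun p => hφabs _
          have hmono : ∫ p : Z × Z, C p.1 ∂π
              ≤ ∫ p : Z × Z, (φ p.2 + lam * dist p.1 p.2) ∂π := by
            refine integral_mono hCπ_int (hφπ_int.add (hdist_int.const_mul lam)) fun p => ?_
            have := hle p.1 p.2
            linarith
          rw [integral_add hφπ_int (hdist_int.const_mul lam), integral_const_mul, hCπ, hφπ,
            hdist_eq] at hmono
          have htoReal : (∫⁻ p, edist p.1 p.2 ∂π).toReal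
              ≤ (wassersteinDist ν μ).toReal + δ := by
            have h1 : (∫⁻ p, edist p.1 p.2 ∂π).toReal
                ≤ (wassersteinDist ν μ + ENNReal.ofReal δ).toReal :=
              ENNReal.toReal_mono (ENNReal.add_ne_top.2 ⟨hW, ofReal_ne_top⟩) hcost.le
            rwa [ENNReal.toReal_add hW ofReal_ne_top, ENNReal.toReal_ofReal hδ.le] at h1
          have hlamδ : lam * δ = ε := by
            rw [hδdef]
            field_simp
          nlinarith [hmono, htoReal]
        have hWE : ((wassersteinDist ν μ : ℝ≥0∞) : EReal)
            = (((wassersteinDist ν μ).toReal : ℝ) : EReal) := by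
          rw [← ENNReal.ofReal_toReal hW, EReal.coe_ennreal_ofReal,
            max_eq_left ENNReal.toReal_nonneg, ENNReal.ofReal_toReal hW]
        rw [hWE, ← EReal.coe_mul, ← EReal.coe_sub, EReal.coe_le_coe_iff]
        linarith
  · -- lower bound
    have key : ∀ ε : ℝ, 0 < ε → ((∫ z₀, φ z₀ ∂μ - ε : ℝ) : EReal)
        ≤ ⨆ (ν : Measure Z) (_ : IsProbabilityMeasure ν),
            ((∫ z, C z ∂ν : ℝ) : EReal) - (lam : EReal) * (wassersteinDist ν μ : EReal) := by
      intro ε hε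
      set e : ℕ → Z := TopologicalSpace.denseSeq Z with he
      have hde : DenseRange e := TopologicalSpace.denseRange_denseSeq Z
      have hp : ∀ z₀ : Z, ∃ n : ℕ, φ z₀ - ε < C (e n) - lam * dist (e n) z₀ := by
        intro z₀
        have h1 : φ z₀ - ε < ⨆ z : Z, (C z - lam * dist z z₀) := by
          rw [← hφ]; linarith
        obtain ⟨z, hz⟩ := exists_lt_of_lt_ciSup h1
        have hopen : IsOpen {y : Z | φ z₀ - ε < C y - lam * dist y z₀} :=
          isOpen_lt continuous_const (hC.sub ((continuous_const).mul (continuous_id.dist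
            continuous_const)))
        obtain ⟨n, hn⟩ := hde.exists_mem_open hopen ⟨z, hz⟩
        exact ⟨n, hn⟩
      set N : Z → ℕ := fun z₀ => Nat.find (hp z₀) with hNdef
      have hNmeas : Measurable N := by
        refine measurable_find hp fun k => ?_
        exact measurableSet_lt ((hφcont.sub continuous_const).measurable)
          ((continuous_const.sub (continuous_const.mul
            (continuous_const.dist continuous_id))).measurable)
      set T : Z → Z := fun z₀ => e (N z₀) with hTdef
      have hT : Measurable T := measurable_from_top.comp hNmeas
      have hTspec : ∀ z₀ : Z, φ z₀ - ε < C (T z₀) - lam * dist (T z₀) z₀ := fun z₀ =>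
        Nat.find_spec (hp z₀)
      set ν : Measure Z := μ.map T with hνdef
      haveI hνprob : IsProbabilityMeasure ν := Measure.isProbabilityMeasure_map hT.aemeasurable
      refine le_trans ?_ (le_iSup₂_of_le ν hνprob le_rfl)
      -- value of ν
      have hCν : ∫ z, C z ∂ν = ∫ z₀, C (T z₀) ∂μ := by
        rw [hνdef, integral_map hT.aemeasurable hC.aestronglyMeasurable]
      have hCT_int : Integrable (fun z₀ => C (T z₀)) μ :=
        integrable_of_abs_le μ _ ((hC.measurable.comp hT).aestronglyMeasurable) M fun z₀ => hM _
      -- coupling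
      set f : Z → Z × Z := fun z₀ => (T z₀, z₀) with hfdef
      have hf : Measurable f := hT.prodMk measurable_id
      have hπ1 : (μ.map f).map Prod.fst = ν := by
        rw [Measure.map_map measurable_fst hf]
        rfl
      have hπ2 : (μ.map f).map Prod.snd = μ := by
        rw [Measure.map_map measurable_snd hf]
        exact Measure.map_id
      have hWle : wassersteinDist ν μ ≤ ∫⁻ z₀, edist (T z₀) z₀ ∂μ := by
        refine le_trans (iInf₂_le (μ.map f) ⟨hπ1, hπ2⟩) ?_
        rw [lintegral_map (measurable_fst.edist measurable_snd) hf]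
      rcases eq_or_lt_of_le hlam with h0 | hpos
      · -- lam = 0
        rw [← h0, EReal.coe_zero, zero_mul, sub_zero, EReal.coe_le_coe_iff, hCν]
        have h1 : ∫ z₀, (φ z₀ - ε) ∂μ ≤ ∫ z₀, C (T z₀) ∂μ := by
          refine integral_mono (hφint.sub (integrable_const ε)) hCT_int fun z₀ => ?_
          have := hTspec z₀
          rw [← h0] at this
          simp only [zero_mul, sub_zero] at this
          linarith
        rw [integral_sub hφint (integrable_const ε), integral_const, probReal_univ] at h1
        simpa using h1
      · -- lam > 0
        have hdistbd : ∀ z₀ : Z, dist (T z₀) z₀ ≤ (2 * M + ε) / lam := by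
          intro z₀
          rw [le_div_iff₀ hpos]
          have h1 := hTspec z₀
          have h2 := (abs_le.1 (hM (T z₀))).2
          have h3 := (abs_le.1 (hM z₀)).1
          have h4 := hCleφ z₀
          nlinarith
        have hdist_int : Integrable (fun z₀ => dist (T z₀) z₀) μ := by
          refine integrable_of_abs_le μ _ ((hT.dist measurable_id).aestronglyMeasurable)
            ((2 * M + ε) / lam) fun z₀ => ?_
          rw [abs_of_nonneg dist_nonneg]
          exact hdistbd z₀
        set D : ℝ := ∫ z₀, dist (T z₀) z₀ ∂μ with hDdef
        have hD0 : 0 ≤ D := integral_nonneg fun z₀ => dist_nonneg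
        have hlcost : ∫⁻ z₀, edist (T z₀) z₀ ∂μ = ENNReal.ofReal D := by
          rw [hDdef, ofReal_integral_eq_lintegral_ofReal hdist_int
            (Filter.Eventually.of_forall fun z₀ => dist_nonneg)]
          simp [edist_dist]
        have hW2 : wassersteinDist ν μ ≤ ENNReal.ofReal D := hlcost ▸ hWle
        have h3 : (lam : EReal) * ((wassersteinDist ν μ : ℝ≥0∞) : EReal)
            ≤ ((lam * D : ℝ) : EReal) := by
          have hlamE : (lam : EReal) = ((ENNReal.ofReal lam : ℝ≥0∞) : EReal) := by
            rw [EReal.coe_ennreal_ofReal, max_eq_left hlam]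
          calc (lam : EReal) * ((wassersteinDist ν μ : ℝ≥0∞) : EReal)
              = ((ENNReal.ofReal lam * wassersteinDist ν μ : ℝ≥0∞) : EReal) := by
                rw [EReal.coe_ennreal_mul, hlamE]
            _ ≤ ((ENNReal.ofReal lam * ENNReal.ofReal D : ℝ≥0∞) : EReal) := by
                rw [EReal.coe_ennreal_le_coe_ennreal_iff]
                exact mul_le_mul_right hW2 _
            _ = ((lam * D : ℝ) : EReal) := by
                rw [← ENNReal.ofReal_mul hlam, EReal.coe_ennreal_ofReal,
                  max_eq_left (mul_nonneg hlam hD0)]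
        have h4 : ((∫ z₀, φ z₀ ∂μ - ε : ℝ) : EReal)
            ≤ ((∫ z₀, C (T z₀) ∂μ - lam * D : ℝ) : EReal) := by
          rw [EReal.coe_le_coe_iff]
          have h1 : ∫ z₀, (φ z₀ - ε) ∂μ ≤ ∫ z₀, (C (T z₀) - lam * dist (T z₀) z₀) ∂μ := by
            refine integral_mono (hφint.sub (integrable_const ε))
              (hCT_int.sub (hdist_int.const_mul lam)) fun z₀ => ?_
            have := hTspec z₀
            linarith
          rw [integral_sub hφint (integrable_const ε), integral_const, probReal_univ,
            integral_sub hCT_int (hdist_int.const_mul lam), integral_const_mul] at h1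
          simpa using h1
        refine le_trans h4 ?_
        rw [EReal.coe_sub, hCν]
        exact EReal.sub_le_sub le_rfl h3
    -- conclude via a limit
    have htend : Filter.Tendsto (fun n : ℕ => ((∫ z₀, φ z₀ ∂μ - 1 / (n + 1) : ℝ) : EReal))
        Filter.atTop (nhds ((∫ z₀, φ z₀ ∂μ : ℝ) : EReal)) := by
      have h1 : Filter.Tendsto (fun n : ℕ => (∫ z₀, φ z₀ ∂μ - 1 / (n + 1) : ℝ))
          Filter.atTop (nhds (∫ z₀, φ z₀ ∂μ - 0)) :=
        (tendsto_const_nhds).sub tendsto_one_div_add_atTop_nhds_zero_nat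
      rw [sub_zero] at h1
      exact (continuous_coe_real_ereal.tendsto _).comp h1
    refine le_of_tendsto htend (Filter.Eventually.of_forall fun n => ?_)
    exact key (1 / (n + 1)) (by positivity)
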